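/- Let λ be a unit of R with λᵢ = φᵢ(λ), and let C be a λ-constacyclic code of length n over R with Cᵢ = φᵢ(C). If gᵢ(x) is a generator polynomial of the λᵢ-constacyclic code Cᵢ over F_q for each i, then C = ⟨e₁g₁(x), e₂g₂(x), e₃g₃(x), e₄g₄(x)⟩ as an ideal of R[x]/(xⁿ - λ), and |C| = q^{4n - Σᵢ deg gᵢ}. -/

import Mathlib

set_option synthInstance.maxHeartbeats 1000000
set_option maxHeartbeats 1000000

noncomputable section

open MvPolynomial

/-- Generators u^2-u, v^2-v of the defining ideal. -/
def genSet (F : Type) [Field F] : Set (MvPolynomial (Fin 2) F) :=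
  {X 0 ^ 2 - X 0, X 1 ^ 2 - X 1}

/-- The ring R = F_q[u,v]/(u^2-u, v^2-v). -/
abbrev Rq (F : Type) [Field F] := MvPolynomial (Fin 2) F ⧸ Ideal.span (genSet F)

instance instCommRingRq (F : Type) [Field F] : CommRing (Rq F) := Ideal.Quotient.commRing _

/-- The image of u in R. -/
def uu (F : Type) [Field F] : Rq F := Ideal.Quotient.mk _ (X 0)

/-- The image of v in R. -/
def vv (F : Type) [Field F] : Rq F := Ideal.Quotient.mk _ (X 1)

/-- The idempotents e1 = 1-u-v+uv, e2 = uv, e3 = u-uv, e4 = v-uv. -/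
def ee (F : Type) [Field F] : Fin 4 → Rq F :=
  ![1 - uu F - vv F + uu F * vv F, uu F * vv F, uu F - uu F * vv F, vv F - uu F * vv F]

/-- Evaluation of R at a point (x,y) with x^2 = x, y^2 = y. -/
def phi4 (F : Type) [Field F] (p : Fin 2 → F) (hp : ∀ i, p i ^ 2 = p i) : Rq F →+* F :=
  Ideal.Quotient.lift _ (aeval p).toRingHom (by
    intro a ha
    have h : Ideal.span (genSet F) ≤ RingHom.ker (aeval p).toRingHom := by
      rw [Ideal.span_le]
      rintro g (rfl | rfl) <;> simp [RingHom.mem_ker, hp 0, hp 1]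
    exact h ha)

/-- The projections φ₁, φ₂, φ₃, φ₄ : R → F_q sending a+bu+cv+duv to
a, a+b+c+d, a+b, a+c respectively (i.e. evaluation at (0,0),(1,1),(1,0),(0,1)). -/
def phiI (F : Type) [Field F] : Fin 4 → (Rq F →+* F) :=
  ![phi4 F ![0,0] (by intro i; fin_cases i <;> norm_num),
    phi4 F ![1,1] (by intro i; fin_cases i <;> norm_num),
    phi4 F ![1,0] (by intro i; fin_cases i <;> norm_num),
    phi4 F ![0,1] (by intro i; fin_cases i <;> norm_num)]

/-- The ring homomorphism R[x]/(xⁿ-λ) → F[x]/(xⁿ-φᵢ(λ)) induced by φᵢ. -/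
def quotMap (F : Type) [Field F] (n : ℕ) (lam : Rq F) (i : Fin 4) :
    (Polynomial (Rq F) ⧸ Ideal.span {Polynomial.X ^ n - Polynomial.C lam}) →+*
    (Polynomial F ⧸ Ideal.span {Polynomial.X ^ n - Polynomial.C (phiI F i lam)}) :=
  Ideal.Quotient.lift _
    ((Ideal.Quotient.mk (Ideal.span {Polynomial.X ^ n - Polynomial.C (phiI F i lam)})).comp
      (Polynomial.mapRingHom (phiI F i))) (by
    intro a ha
    have h : Ideal.span {Polynomial.X ^ n - Polynomial.C lam} ≤
        RingHom.ker ((Ideal.Quotient.mk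
            (Ideal.span {Polynomial.X ^ n - Polynomial.C (phiI F i lam)})).comp
          (Polynomial.mapRingHom (phiI F i))) := by
      rw [Ideal.span_le]
      rintro g rfl
      have : (Polynomial.mapRingHom (phiI F i)) (Polynomial.X ^ n - Polynomial.C lam) =
          Polynomial.X ^ n - Polynomial.C (phiI F i lam) := by
        simp
      simp only [SetLike.mem_coe, RingHom.mem_ker, RingHom.comp_apply, this,
        Ideal.Quotient.eq_zero_iff_mem]
      exact Ideal.subset_span rfl
    exact h ha)
section
variable (F : Type) [Field F]

lemma hu_sq : uu F ^ 2 = uu F := by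
  rw [uu, ← map_pow, Ideal.Quotient.eq]
  exact Ideal.subset_span (Or.inl rfl)

lemma hv_sq : vv F ^ 2 = vv F := by
  rw [vv, ← map_pow, Ideal.Quotient.eq]
  exact Ideal.subset_span (Or.inr rfl)

lemma phiI_alg (j : Fin 4) (a : F) : phiI F j (algebraMap F (Rq F) a) = a := by
  have : algebraMap F (Rq F) a = Ideal.Quotient.mk _ (MvPolynomial.C a) := rfl
  fin_cases j <;> simp [this, phiI, phi4, Ideal.Quotient.lift_mk]

lemma phiI_uu (j : Fin 4) : phiI F j (uu F) = ![0,1,1,0] j := by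
  fin_cases j <;> simp [phiI, phi4, uu, Ideal.Quotient.lift_mk]

lemma phiI_vv (j : Fin 4) : phiI F j (vv F) = ![0,1,0,1] j := by
  fin_cases j <;> simp [phiI, phi4, vv, Ideal.Quotient.lift_mk]

end
section
variable (F : Type) [Field F]

lemma ee_mul_uu (j : Fin 4) : ee F j * uu F = algebraMap F (Rq F) (phiI F j (uu F)) * ee F j := by
  have hu := hu_sq F
  have hv := hv_sq F
  fin_cases j
  · show (1 - uu F - vv F + uu F * vv F) * uu F = algebraMap F (Rq F) (phiI F 0 (uu F)) * (1 - uu F - vv F + uu F * vv F)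
    rw [phiI_uu]
    show _ = algebraMap F (Rq F) 0 * _
    rw [map_zero, zero_mul]
    linear_combination (vv F - 1) * hu
  · show (uu F * vv F) * uu F = algebraMap F (Rq F) (phiI F 1 (uu F)) * (uu F * vv F)
    rw [phiI_uu]
    show _ = algebraMap F (Rq F) 1 * _
    rw [map_one, one_mul]
    linear_combination (vv F) * hu
  · show (uu F - uu F * vv F) * uu F = algebraMap F (Rq F) (phiI F 2 (uu F)) * (uu F - uu F * vv F)
    rw [phiI_uu]
    show _ = algebraMap F (Rq F) 1 * _
    rw [map_one, one_mul]
    linear_combination (1 - vv F) * hu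
  · show (vv F - uu F * vv F) * uu F = algebraMap F (Rq F) (phiI F 3 (uu F)) * (vv F - uu F * vv F)
    rw [phiI_uu]
    show _ = algebraMap F (Rq F) 0 * _
    rw [map_zero, zero_mul]
    linear_combination (-vv F) * hu

lemma ee_mul_vv (j : Fin 4) : ee F j * vv F = algebraMap F (Rq F) (phiI F j (vv F)) * ee F j := by
  have hu := hu_sq F
  have hv := hv_sq F
  fin_cases j
  · show (1 - uu F - vv F + uu F * vv F) * vv F = algebraMap F (Rq F) (phiI F 0 (vv F)) * (1 - uu F - vv F + uu F * vv F)
    rw [phiI_vv]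
    show _ = algebraMap F (Rq F) 0 * _
    rw [map_zero, zero_mul]
    linear_combination (uu F - 1) * hv
  · show (uu F * vv F) * vv F = algebraMap F (Rq F) (phiI F 1 (vv F)) * (uu F * vv F)
    rw [phiI_vv]
    show _ = algebraMap F (Rq F) 1 * _
    rw [map_one, one_mul]
    linear_combination (uu F) * hv
  · show (uu F - uu F * vv F) * vv F = algebraMap F (Rq F) (phiI F 2 (vv F)) * (uu F - uu F * vv F)
    rw [phiI_vv]
    show _ = algebraMap F (Rq F) 0 * _
    rw [map_zero, zero_mul]
    linear_combination (-uu F) * hv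
  · show (vv F - uu F * vv F) * vv F = algebraMap F (Rq F) (phiI F 3 (vv F)) * (vv F - uu F * vv F)
    rw [phiI_vv]
    show _ = algebraMap F (Rq F) 1 * _
    rw [map_one, one_mul]
    linear_combination (1 - uu F) * hv

end
section
variable (F : Type) [Field F]

lemma ee_mul_key (j : Fin 4) (r : Rq F) :
    ee F j * r = algebraMap F (Rq F) (phiI F j r) * ee F j := by
  obtain ⟨p, rfl⟩ := Ideal.Quotient.mk_surjective r
  induction p using MvPolynomial.induction_on with
  | C a =>
      have h1 : (Ideal.Quotient.mk (Ideal.span (genSet F))) (MvPolynomial.C a)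
          = algebraMap F (Rq F) a := rfl
      rw [h1, phiI_alg, mul_comm]
  | add p q hp hq =>
      rw [map_add, mul_add, hp, hq, map_add, map_add, add_mul]
  | mul_X p k hp =>
      have hX : ∀ k : Fin 2, ee F j * (Ideal.Quotient.mk (Ideal.span (genSet F))) (X k)
          = algebraMap F (Rq F) (phiI F j ((Ideal.Quotient.mk (Ideal.span (genSet F))) (X k)))
            * ee F j := by
        intro k
        fin_cases k
        · exact ee_mul_uu F j
        · exact ee_mul_vv F j
      calc ee F j * (Ideal.Quotient.mk (Ideal.span (genSet F))) (p * X k)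
          = (ee F j * (Ideal.Quotient.mk _) (X k)) * (Ideal.Quotient.mk _) p := by
            rw [map_mul]; ring
        _ = algebraMap F (Rq F) (phiI F j ((Ideal.Quotient.mk _) (X k))) * (ee F j * (Ideal.Quotient.mk _) p) := by
            rw [hX k]; ring
        _ = _ := by
            rw [hp]; simp only [map_mul]; ring

lemma phiI_ee (j i : Fin 4) : phiI F j (ee F i) = if i = j then 1 else 0 := by
  fin_cases i <;> fin_cases j <;>
    simp [ee, phiI, phi4, uu, vv, Ideal.Quotient.lift_mk]

lemma sum_ee : ∑ i, ee F i = 1 := by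
  rw [Fin.sum_univ_four]
  show (1 - uu F - vv F + uu F * vv F) + uu F * vv F + (uu F - uu F * vv F) + (vv F - uu F * vv F) = 1
  ring

end
section
variable (F : Type) [Field F] (n : ℕ) (lam : Rq F)

local notation "PX" => (Polynomial.X : Polynomial (Rq F))
local notation "pC" => (Polynomial.C : Rq F →+* Polynomial (Rq F))
local notation "fC" => (Polynomial.C : F →+* Polynomial F)
local notation "fX" => (Polynomial.X : Polynomial F)

lemma quotMap_mk (j : Fin 4) (p : Polynomial (Rq F)) :
    quotMap F n lam j (Ideal.Quotient.mk _ p) =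
      Ideal.Quotient.mk (Ideal.span {fX ^ n - fC (phiI F j lam)}) (p.map (phiI F j)) := rfl

lemma C_ee_mul (j : Fin 4) (p : Polynomial (Rq F)) :
    pC (ee F j) * p = pC (ee F j) * ((p.map (phiI F j)).map (algebraMap F (Rq F))) := by
  ext k
  simp only [Polynomial.coeff_C_mul, Polynomial.coeff_map]
  rw [ee_mul_key F j (p.coeff k), ee_mul_key F j ((algebraMap F (Rq F)) ((phiI F j) (p.coeff k))),
    phiI_alg]

lemma quotMap_jointly_injective
    (z : Polynomial (Rq F) ⧸ Ideal.span {PX ^ n - pC lam})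
    (hz : ∀ j, quotMap F n lam j z = 0) : z = 0 := by
  obtain ⟨p, rfl⟩ := Ideal.Quotient.mk_surjective z
  rw [← map_zero (Ideal.Quotient.mk (Ideal.span {PX ^ n - pC lam})), Ideal.Quotient.eq, sub_zero]
  have hdvd : ∀ j : Fin 4, (PX ^ n - pC lam) ∣ (pC (ee F j) * p) := by
    intro j
    have h0 := hz j
    rw [quotMap_mk, Ideal.Quotient.eq_zero_iff_mem, Ideal.mem_span_singleton] at h0
    obtain ⟨q, hq⟩ := h0
    rw [C_ee_mul F j p, hq]
    have key : pC (ee F j) * (PX ^ n - pC (algebraMap F (Rq F) (phiI F j lam)))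
        = pC (ee F j) * (PX ^ n - pC lam) := by
      have h2 : ee F j * (algebraMap F (Rq F) (phiI F j lam)) = ee F j * lam := by
        rw [mul_comm (ee F j) ((algebraMap F (Rq F)) ((phiI F j) lam)), ← ee_mul_key F j lam]
      calc pC (ee F j) * (PX ^ n - pC (algebraMap F (Rq F) (phiI F j lam)))
          = pC (ee F j) * (PX ^ n) - pC (ee F j * (algebraMap F (Rq F) (phiI F j lam))) := by
            rw [mul_sub, map_mul]
        _ = pC (ee F j) * (PX ^ n) - pC (ee F j * lam) := by rw [h2]
        _ = _ := by rw [mul_sub, map_mul]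
    have hmap : ((fX ^ n - fC (phiI F j lam)) * q).map (algebraMap F (Rq F))
        = (PX ^ n - pC (algebraMap F (Rq F) (phiI F j lam))) * q.map (algebraMap F (Rq F)) := by
      rw [Polynomial.map_mul, Polynomial.map_sub, Polynomial.map_pow, Polynomial.map_X,
        Polynomial.map_C]
    rw [hmap, ← mul_assoc, key]
    exact ⟨pC (ee F j) * q.map (algebraMap F (Rq F)), by ring⟩
  rw [Ideal.mem_span_singleton]
  have hp : p = ∑ j : Fin 4, pC (ee F j) * p := by
    rw [← Finset.sum_mul, ← map_sum, sum_ee, map_one, one_mul]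
  rw [hp]
  exact Finset.dvd_sum fun j _ => hdvd j

end
section
variable (F : Type) [Field F] (n : ℕ) (lam : Rq F)

local notation "PX" => (Polynomial.X : Polynomial (Rq F))
local notation "pC" => (Polynomial.C : Rq F →+* Polynomial (Rq F))
local notation "fC" => (Polynomial.C : F →+* Polynomial F)
local notation "fX" => (Polynomial.X : Polynomial F)
local notation "mkS" => (Ideal.Quotient.mk (Ideal.span {PX ^ n - pC lam}))
local notation "mkT" j => (Ideal.Quotient.mk (Ideal.span {fX ^ n - fC (phiI F j lam)}))

lemma phiI_comp_alg (j : Fin 4) :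
    (phiI F j).comp (algebraMap F (Rq F)) = RingHom.id F :=
  RingHom.ext fun a => phiI_alg F j a

lemma quotMap_C_ee (i j : Fin 4) :
    quotMap F n lam j (mkS (pC (ee F i))) = if i = j then 1 else 0 := by
  rw [quotMap_mk, Polynomial.map_C, phiI_ee]
  split <;> simp

lemma quotMap_mapAlg (j : Fin 4) (h : Polynomial F) :
    quotMap F n lam j (mkS (h.map (algebraMap F (Rq F)))) = (mkT j) h := by
  rw [quotMap_mk, Polynomial.map_map, phiI_comp_alg, Polynomial.map_id]

lemma quotMap_surj (j : Fin 4) : Function.Surjective (quotMap F n lam j) := by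
  intro y
  obtain ⟨h, rfl⟩ := Ideal.Quotient.mk_surjective y
  exact ⟨mkS (h.map (algebraMap F (Rq F))), quotMap_mapAlg F n lam j h⟩

end
section
variable (F : Type) [Field F] (n : ℕ) (lam : Rq F)

local notation "PX" => (Polynomial.X : Polynomial (Rq F))
local notation "pC" => (Polynomial.C : Rq F →+* Polynomial (Rq F))
local notation "fC" => (Polynomial.C : F →+* Polynomial F)
local notation "fX" => (Polynomial.X : Polynomial F)
local notation "mkS" => (Ideal.Quotient.mk (Ideal.span {PX ^ n - pC lam}))
local notation "mkT" j => (Ideal.Quotient.mk (Ideal.span {fX ^ n - fC (phiI F j lam)}))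

lemma eq_of_quotMap_eq (a b : Polynomial (Rq F) ⧸ Ideal.span {PX ^ n - pC lam})
    (h : ∀ j, quotMap F n lam j a = quotMap F n lam j b) : a = b := by
  have := quotMap_jointly_injective F n lam (a - b) (fun j => by rw [map_sub, h j, sub_self])
  exact sub_eq_zero.mp this

lemma gen_eq (g : Polynomial F) (i : Fin 4)
    (c : Polynomial (Rq F) ⧸ Ideal.span {PX ^ n - pC lam})
    (hc : quotMap F n lam i c = (mkT i) g) :
    mkS (pC (ee F i) * g.map (algebraMap F (Rq F))) = mkS (pC (ee F i)) * c := by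
  apply eq_of_quotMap_eq
  intro j
  rw [map_mul mkS, map_mul (quotMap F n lam j), map_mul (quotMap F n lam j), quotMap_C_ee,
    quotMap_mapAlg]
  by_cases hij : i = j
  · subst hij; rw [if_pos rfl, one_mul, one_mul, hc]
  · rw [if_neg hij, zero_mul, zero_mul]

end
section
variable (F : Type) [Field F] (n : ℕ) (lam : Rq F)

local notation "PX" => (Polynomial.X : Polynomial (Rq F))
local notation "pC" => (Polynomial.C : Rq F →+* Polynomial (Rq F))
local notation "fC" => (Polynomial.C : F →+* Polynomial F)
local notation "fX" => (Polynomial.X : Polynomial F)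
local notation "mkS" => (Ideal.Quotient.mk (Ideal.span {PX ^ n - pC lam}))
local notation "mkT" j => (Ideal.Quotient.mk (Ideal.span {fX ^ n - fC (phiI F j lam)}))

lemma span_eq_main
    (C : Ideal (Polynomial (Rq F) ⧸ Ideal.span {PX ^ n - pC lam}))
    (g : Fin 4 → Polynomial F)
    (hgen : ∀ i, Ideal.map (quotMap F n lam i) C = Ideal.span {(mkT i) (g i)}) :
    C = Ideal.span (Set.range fun i : Fin 4 =>
      mkS (pC (ee F i) * (g i).map (algebraMap F (Rq F)))) := by
  -- first: for each i, find c_i ∈ C with quotMap i c_i = mk (g i)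
  have hex : ∀ i : Fin 4, ∃ c, c ∈ C ∧ quotMap F n lam i c = (mkT i) (g i) := by
    intro i
    have : (mkT i) (g i) ∈ Ideal.map (quotMap F n lam i) C := by
      rw [hgen i]; exact Ideal.subset_span rfl
    exact Ideal.mem_map_iff_of_surjective _ (quotMap_surj F n lam i) |>.mp this
  apply le_antisymm
  · -- C ≤ span
    intro c hc
    have hone : (1 : Polynomial (Rq F) ⧸ Ideal.span {PX ^ n - pC lam})
        = ∑ i : Fin 4, mkS (pC (ee F i)) := by
      rw [← map_sum, ← map_sum, sum_ee, map_one, map_one]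
    have hsum : c = ∑ i : Fin 4, mkS (pC (ee F i)) * c := by
      rw [← Finset.sum_mul, ← hone]; exact (one_mul c).symm
    rw [hsum]
    apply Ideal.sum_mem
    intro i _
    -- quotMap i c ∈ span {mk g i}
    have h1 : quotMap F n lam i c ∈ Ideal.span {(mkT i) (g i)} := by
      rw [← hgen i]; exact Ideal.mem_map_of_mem _ hc
    rw [Ideal.mem_span_singleton'] at h1
    obtain ⟨a, ha⟩ := h1
    obtain ⟨h, rfl⟩ := Ideal.Quotient.mk_surjective a
    have key : mkS (pC (ee F i)) * c
        = mkS (pC (ee F i) * (g i).map (algebraMap F (Rq F))) * mkS (h.map (algebraMap F (Rq F))) := by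
      apply eq_of_quotMap_eq
      intro j
      rw [map_mul, map_mul, map_mul mkS, map_mul (quotMap F n lam j), quotMap_C_ee,
        quotMap_mapAlg, quotMap_mapAlg]
      by_cases hij : i = j
      · subst hij
        rw [if_pos rfl, one_mul, one_mul, ← ha, mul_comm]
      · rw [if_neg hij, zero_mul, zero_mul, zero_mul]
    rw [key]
    rw [mul_comm (mkS _) (mkS (h.map (algebraMap F (Rq F))))]; exact Ideal.mul_mem_left _ _ (Ideal.subset_span ⟨i, rfl⟩)
  · -- span ≤ C
    rw [Ideal.span_le]
    rintro x ⟨i, rfl⟩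
    obtain ⟨c, hcC, hci⟩ := hex i
    simp only
    rw [gen_eq F n lam (g i) i c hci]
    exact Ideal.mul_mem_left _ _ hcC

end
section
variable (K : Type) [Field K] [Fintype K]

lemma card_span_quot (f g : Polynomial K) (hf : f ≠ 0) (hg : g ≠ 0) (hdvd : g ∣ f) :
    Nat.card (Ideal.span {Ideal.Quotient.mk (Ideal.span {f}) g} :
      Ideal (Polynomial K ⧸ Ideal.span {f})) =
    Fintype.card K ^ (f.natDegree - g.natDegree) := by
  obtain ⟨k, hk⟩ := hdvd
  have hk0 : k ≠ 0 := by rintro rfl; rw [mul_zero] at hk; exact hf hk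
  set I : Ideal (Polynomial K) := Ideal.span {f} with hI
  let L : Polynomial K →ₗ[Polynomial K] (Polynomial K ⧸ I) :=
    I.mkQ.comp (LinearMap.mulLeft (Polynomial K) g)
  have hL : ∀ p, L p = Ideal.Quotient.mk I (g * p) := fun p => rfl
  have hker : LinearMap.ker L = Ideal.span {k} := by
    ext p
    rw [LinearMap.mem_ker, hL]
    have : (Ideal.Quotient.mk I) (g * p) = 0 ↔ g * p ∈ I :=
      Ideal.Quotient.eq_zero_iff_mem
    rw [this, hI, Ideal.mem_span_singleton, Ideal.mem_span_singleton, hk,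
      mul_dvd_mul_iff_left hg]
  have hrange : ∀ x : Polynomial K ⧸ I,
      x ∈ LinearMap.range L ↔ x ∈ Ideal.span {Ideal.Quotient.mk I g} := by
    intro x
    rw [LinearMap.mem_range, Ideal.mem_span_singleton']
    constructor
    · rintro ⟨p, rfl⟩
      exact ⟨Ideal.Quotient.mk I p, by rw [hL, ← map_mul, mul_comm]⟩
    · rintro ⟨a, ha⟩
      obtain ⟨p, rfl⟩ := Ideal.Quotient.mk_surjective a
      exact ⟨p, by rw [hL, ← ha, ← map_mul, mul_comm]⟩
  have e1 : (Ideal.span {Ideal.Quotient.mk I g} : Ideal (Polynomial K ⧸ I)) ≃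
      LinearMap.range L := Equiv.subtypeEquivRight fun x => (hrange x).symm
  have e2 : (Polynomial K ⧸ LinearMap.ker L) ≃ₗ[Polynomial K] LinearMap.range L :=
    LinearMap.quotKerEquivRange L
  have e3 : (Polynomial K ⧸ LinearMap.ker L) ≃ₗ[Polynomial K]
      (Polynomial K ⧸ (Ideal.span {k} : Ideal (Polynomial K))) :=
    Submodule.quotEquivOfEq _ _ hker
  have e4 : AdjoinRoot k ≃ₗ[K] (Fin k.natDegree → K) :=
    (AdjoinRoot.powerBasis hk0).basis.equivFun
  have hcard : Nat.card (Ideal.span {Ideal.Quotient.mk I g} :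
      Ideal (Polynomial K ⧸ I)) = Nat.card (Fin k.natDegree → K) := by
    refine Nat.card_congr (e1.trans ?_)
    exact (e2.symm.toEquiv).trans ((e3.toEquiv).trans e4.toEquiv)
  rw [hcard, Nat.card_fun, Nat.card_eq_fintype_card, Nat.card_eq_fintype_card,
    Fintype.card_fin]
  congr 1
  have : f.natDegree = g.natDegree + k.natDegree := by
    rw [hk, Polynomial.natDegree_mul hg hk0]
  omega

end
theorem stmt8 (F : Type) [Field F] [Fintype F] (n : ℕ) (hn : 0 < n)
    (lam : Rq F) (hlam : IsUnit lam)
    (C : Ideal (Polynomial (Rq F) ⧸ Ideal.span {Polynomial.X ^ n - Polynomial.C lam}))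
    (g : Fin 4 → Polynomial F)
    (hmonic : ∀ i, (g i).Monic)
    (hdvd : ∀ i, g i ∣ Polynomial.X ^ n - Polynomial.C (phiI F i lam))
    (hgen : ∀ i, Ideal.map (quotMap F n lam i) C =
      Ideal.span {Ideal.Quotient.mk _ (g i)}) :
    C = Ideal.span (Set.range fun i : Fin 4 =>
        Ideal.Quotient.mk _ (Polynomial.C (ee F i) * (g i).map (algebraMap F (Rq F)))) ∧
    Nat.card C = Fintype.card F ^ (4 * n - ∑ i, (g i).natDegree) := by
  have h1 := span_eq_main F n lam C g hgen
  refine ⟨h1, ?_⟩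
  -- notation
  set mkS := Ideal.Quotient.mk (Ideal.span {(Polynomial.X : Polynomial (Rq F)) ^ n - Polynomial.C lam}) with hmkS
  -- the component ideals
  set Ci : ∀ i : Fin 4, Ideal (Polynomial F ⧸
      Ideal.span {(Polynomial.X : Polynomial F) ^ n - Polynomial.C (phiI F i lam)}) :=
    fun i => Ideal.span {Ideal.Quotient.mk _ (g i)} with hCi
  -- the equivalence C ≃ ∀ i, Ci
  have E : Nat.card C = Nat.card (∀ i : Fin 4, Ci i) := by
    apply Nat.card_congr
    refine Equiv.ofBijective (fun c => fun i =>
      ⟨quotMap F n lam i c.1, by rw [hCi]; dsimp only; rw [← hgen i]; exact Ideal.mem_map_of_mem _ c.2⟩) ⟨?_, ?_⟩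
    · intro c c' hcc
      apply Subtype.ext
      apply eq_of_quotMap_eq
      intro j
      have := congrFun hcc j
      simpa using this
    · intro t
      have hti : ∀ i, ∃ h : Polynomial F,
          (Ideal.Quotient.mk (Ideal.span {(Polynomial.X : Polynomial F) ^ n
            - Polynomial.C (phiI F i lam)})) (g i)
          * (Ideal.Quotient.mk (Ideal.span {(Polynomial.X : Polynomial F) ^ n
            - Polynomial.C (phiI F i lam)})) h = (t i : _) := by
        intro i
        have this : (t i).1 ∈ Ideal.span {(Ideal.Quotient.mk (Ideal.span
            {(Polynomial.X : Polynomial F) ^ n - Polynomial.C (phiI F i lam)})) (g i)} := (t i).2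
        rw [Ideal.mem_span_singleton'] at this
        obtain ⟨a, ha⟩ := this
        obtain ⟨h, rfl⟩ := Ideal.Quotient.mk_surjective a
        exact ⟨h, by rw [mul_comm, ha]⟩
      choose h hh using hti
      refine ⟨⟨∑ i : Fin 4, mkS (Polynomial.C (ee F i)
        * (g i).map (algebraMap F (Rq F)) * (h i).map (algebraMap F (Rq F))), ?_⟩, ?_⟩
      · apply Ideal.sum_mem
        intro i _
        rw [h1, map_mul]
        exact Ideal.mul_mem_right _ _ (Ideal.subset_span ⟨i, rfl⟩)
      · funext i
        apply Subtype.ext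
        dsimp only
        rw [map_sum]
        have hterm : ∀ j : Fin 4, quotMap F n lam i (mkS (Polynomial.C (ee F j)
            * (g j).map (algebraMap F (Rq F)) * (h j).map (algebraMap F (Rq F))))
            = (if j = i then 1 else 0) * ((Ideal.Quotient.mk _) (g j) * (Ideal.Quotient.mk _) (h j)) := by
          intro j
          rw [map_mul mkS, map_mul mkS, map_mul (quotMap F n lam i), map_mul (quotMap F n lam i),
            quotMap_C_ee, quotMap_mapAlg, quotMap_mapAlg, mul_assoc]
        rw [Finset.sum_congr rfl fun j _ => hterm j]
        simp only [ite_mul, one_mul, zero_mul, Finset.sum_ite_eq', Finset.mem_univ, if_true]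
        exact hh i
  rw [E, Nat.card_pi]
  have hcard : ∀ i : Fin 4, Nat.card (Ci i) = Fintype.card F ^ (n - (g i).natDegree) := by
    intro i
    have hf0 : ((Polynomial.X : Polynomial F) ^ n - Polynomial.C (phiI F i lam)) ≠ 0 :=
      Polynomial.X_pow_sub_C_ne_zero hn _
    have := card_span_quot F ((Polynomial.X : Polynomial F) ^ n - Polynomial.C (phiI F i lam))
      (g i) hf0 (hmonic i).ne_zero (hdvd i)
    rw [Polynomial.natDegree_X_pow_sub_C] at this
    exact this
  rw [Finset.prod_congr rfl fun i _ => hcard i, Finset.prod_pow_eq_pow_sum]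
  congr 1
  have hle : ∀ i : Fin 4, (g i).natDegree ≤ n := by
    intro i
    have := Polynomial.natDegree_le_of_dvd (hdvd i) (Polynomial.X_pow_sub_C_ne_zero hn _)
    rwa [Polynomial.natDegree_X_pow_sub_C] at this
  have h0 := hle 0; have h1' := hle 1; have h2 := hle 2; have h3 := hle 3
  rw [Fin.sum_univ_four, Fin.sum_univ_four]
  omega
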